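/- For the 5-dimensional simplex Δ generated by the origin and the columns of the matrix M with rows (1,1,1,1,1), (0,0,1,1,1), (0,1,0,1,1), (0,1,1,0,1), (0,1,1,1,0): if p ≡ 2 (mod 3), then the multiplication-by-p action swaps the two nonzero elements (2/3,1/3,1/3,1/3,1/3) and (1/3,2/3,2/3,2/3,2/3) of S(Δ), and hence the weight function on S(Δ) (weights 2 and 3 respectively) is not stable under the p-action. -/

import Mathlib

lemma fract13 (p : ℕ) (hp3 : p % 3 = 2) : Int.fract ((p : ℚ) * (1/3)) = 2/3 := by
  obtain ⟨k, hk⟩ : ∃ k : ℕ, p = 3*k+2 := ⟨p/3, by omega⟩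
  subst hk
  have h : ((3*k+2 : ℕ) : ℚ) * (1/3) = (k : ℤ) + 2/3 := by push_cast; ring
  rw [h, Int.fract_intCast_add, Int.fract_eq_self.2 (by norm_num)]

lemma fract23 (p : ℕ) (hp3 : p % 3 = 2) : Int.fract ((p : ℚ) * (2/3)) = 1/3 := by
  obtain ⟨k, hk⟩ : ∃ k : ℕ, p = 3*k+2 := ⟨p/3, by omega⟩
  subst hk
  have h : ((3*k+2 : ℕ) : ℚ) * (2/3) = ((2*k+1 : ℤ)) + 1/3 := by push_cast; ring
  rw [h, Int.fract_intCast_add, Int.fract_eq_self.2 (by norm_num)]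

/-- For the 5-dimensional counter-example: if `p ≡ 2 (mod 3)`, the multiplication-by-`p`
action swaps the two nonzero elements `(2/3,1/3,1/3,1/3,1/3)` and `(1/3,2/3,2/3,2/3,2/3)`
of `S(Δ)`, and hence the weight function on `S(Δ)` (weights `2` and `3`) is not stable
under the `p`-action. -/
theorem five_dim_counterexample_p_action (p : ℕ) (hp : p.Prime) (hp3 : p % 3 = 2)
    (M : Matrix (Fin 5) (Fin 5) ℤ)
    (hM : M = !![1,1,1,1,1; 0,0,1,1,1; 0,1,0,1,1; 0,1,1,0,1; 0,1,1,1,0])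
    (S : Set (Fin 5 → ℚ))
    (hS : S = {r | (∀ i, 0 ≤ r i ∧ r i < 1) ∧ ∀ i, ∃ z : ℤ, ∑ j, (M i j : ℚ) * r j = z})
    (r₁ r₂ : Fin 5 → ℚ)
    (hr₁ : r₁ = ![2/3, 1/3, 1/3, 1/3, 1/3]) (hr₂ : r₂ = ![1/3, 2/3, 2/3, 2/3, 2/3]) :
    r₁ ∈ S ∧ r₂ ∈ S ∧
      (fun i => Int.fract ((p : ℚ) * r₁ i)) = r₂ ∧
      (fun i => Int.fract ((p : ℚ) * r₂ i)) = r₁ ∧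
      ∑ i, r₁ i = 2 ∧ ∑ i, r₂ i = 3 ∧
      ∑ i, Int.fract ((p : ℚ) * r₁ i) ≠ ∑ i, r₁ i := by
  subst hM hS hr₁ hr₂
  have h1 := fract13 p hp3
  have h2 := fract23 p hp3
  have h1' : Int.fract ((p : ℚ) * 3⁻¹) = 2/3 := by rw [← one_div]; exact h1
  refine ⟨⟨fun i => by fin_cases i <;> norm_num, fun i => by
      fin_cases i <;> simp [Fin.sum_univ_five] <;>
      [exact ⟨2, by norm_num⟩; exact ⟨1, by norm_num⟩; exact ⟨1, by norm_num⟩;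
        exact ⟨1, by norm_num⟩; exact ⟨1, by norm_num⟩]⟩,
    ⟨fun i => by fin_cases i <;> norm_num, fun i => by
      fin_cases i <;> simp [Fin.sum_univ_five] <;>
      [exact ⟨3, by norm_num⟩; exact ⟨2, by norm_num⟩; exact ⟨2, by norm_num⟩;
        exact ⟨2, by norm_num⟩; exact ⟨2, by norm_num⟩]⟩,
    funext fun i => by fin_cases i <;> simp [h1, h1', h2],
    funext fun i => by fin_cases i <;> simp [h1, h1', h2],
    by rw [Fin.sum_univ_five]; simp [Matrix.cons_val]; norm_num,
    by rw [Fin.sum_univ_five]; simp [Matrix.cons_val]; norm_num,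
    by rw [Fin.sum_univ_five, Fin.sum_univ_five]; simp [h1, h1', h2]; norm_num⟩
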